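/- Let A be a real symmetric n×n matrix (n ≥ 2) with σ₁(A) ≥ 0 and σ₂(A) ≥ 0, where σ₁ is the trace and σ₂ = ∑_{i<j}(a_{ii}a_{jj} − a_{ij}a_{ji}). Then the matrix σ₁(A)·I − A is positive semidefinite. -/

import Mathlib

open Finset

theorem ellipticity_core (n : ℕ) (hn : 2 ≤ n) (A : Matrix (Fin n) (Fin n) ℝ)
    (hA : A.IsSymm) (h1 : 0 ≤ Matrix.trace A)
    (h2 : 0 ≤ ∑ i, ∑ j ∈ univ.filter (fun j => i < j), (A i i * A j j - A i j * A j i)) :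
    (Matrix.trace A • (1 : Matrix (Fin n) (Fin n) ℝ) - A).PosSemidef := by
  classical
  have hH : A.IsHermitian := by
    rwa [Matrix.IsHermitian, Matrix.conjTranspose_eq_transpose_of_trivial]
  set s := Matrix.trace A with hs
  set U : Matrix (Fin n) (Fin n) ℝ := (hH.eigenvectorUnitary : Matrix (Fin n) (Fin n) ℝ) with hU
  set lam := hH.eigenvalues with hlam
  have hUU : U * star U = 1 := (Matrix.mem_unitaryGroup_iff).mp (hH.eigenvectorUnitary).2
  have hUU' : star U * U = 1 := (Matrix.mem_unitaryGroup_iff').mp (hH.eigenvectorUnitary).2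
  have hspec : A = U * Matrix.diagonal lam * star U := by
    have := hH.spectral_theorem
    simpa using this
  -- trace facts
  have htr : s = ∑ i, lam i := by
    rw [hs, hspec, Matrix.trace_mul_cycle, hUU', one_mul, Matrix.trace_diagonal]
  have htr2 : Matrix.trace (A * A) = ∑ i, lam i ^ 2 := by
    rw [hspec]
    have : U * Matrix.diagonal lam * star U * (U * Matrix.diagonal lam * star U)
        = U * (Matrix.diagonal lam * Matrix.diagonal lam) * star U := by
      simp only [mul_assoc]
      rw [← mul_assoc (star U), hUU', one_mul]
    rw [this, Matrix.trace_mul_cycle, hUU', one_mul, Matrix.diagonal_mul_diagonal,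
      Matrix.trace_diagonal]
    simp [sq]
  -- double sum identity
  have hdouble : ∑ i, ∑ j, (A i i * A j j - A i j * A j i)
      = 2 * ∑ i, ∑ j ∈ univ.filter (fun j => i < j), (A i i * A j j - A i j * A j i) := by
    set f : Fin n → Fin n → ℝ := fun i j => A i i * A j j - A i j * A j i with hf
    have hsymm : ∀ i j, f i j = f j i := by intro i j; simp [hf]; ring
    have hdiag : ∀ i, f i i = 0 := by intro i; simp [hf]
    have step : ∀ i, ∑ j, f i j = ∑ j ∈ univ.filter (fun j => i < j), f i j
        + ∑ j ∈ univ.filter (fun j => j < i), f i j := by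
      intro i
      rw [← Finset.sum_filter_add_sum_filter_not univ (fun j => i < j) (f i)]
      congr 1
      have hins : univ.filter (fun j => ¬ i < j) = insert i (univ.filter (fun j => j < i)) := by
        ext j
        simp [not_lt, le_iff_lt_or_eq, or_comm]
      rw [hins, Finset.sum_insert (by simp), hdiag, zero_add]
    have swap : ∑ i, ∑ j ∈ univ.filter (fun j => j < i), f i j
        = ∑ i, ∑ j ∈ univ.filter (fun j => i < j), f i j := by
      rw [Finset.sum_comm' (t' := univ) (s' := fun j => univ.filter (fun i => j < i))
        (by intro i j; simp)]
      exact Finset.sum_congr rfl fun i _ => Finset.sum_congr rfl fun j _ => hsymm j i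
    calc ∑ i, ∑ j, f i j = ∑ i, (∑ j ∈ univ.filter (fun j => i < j), f i j
        + ∑ j ∈ univ.filter (fun j => j < i), f i j) := by
          exact Finset.sum_congr rfl fun i _ => step i
      _ = _ := by rw [Finset.sum_add_distrib, swap]; ring
  have hexpand : ∑ i, ∑ j, (A i i * A j j - A i j * A j i) = s ^ 2 - Matrix.trace (A * A) := by
    rw [hs, Matrix.trace, Matrix.trace]
    simp only [Matrix.diag, Matrix.mul_apply, sq, Finset.sum_mul, Finset.mul_sum,
      Finset.sum_sub_distrib]
    congr 1
    exact Finset.sum_congr rfl fun x _ => Finset.sum_congr rfl fun y _ => mul_comm _ _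
  have hAA : Matrix.trace (A * A) ≤ s ^ 2 := by
    nlinarith [hdouble, hexpand, h2]
  -- each eigenvalue ≤ s
  have hlamle : ∀ k, lam k ≤ s := by
    intro k
    have h1' : lam k ^ 2 ≤ ∑ i, lam i ^ 2 :=
      Finset.single_le_sum (f := fun i => lam i ^ 2) (fun i _ => sq_nonneg _) (Finset.mem_univ k)
    have : lam k ^ 2 ≤ s ^ 2 := by rw [← htr2] at *; linarith
    nlinarith
  -- conclude
  have hM : s • (1 : Matrix (Fin n) (Fin n) ℝ) - A
      = U * Matrix.diagonal (fun i => s - lam i) * star U := by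
    have h1d : (Matrix.diagonal (fun i => s - lam i) : Matrix (Fin n) (Fin n) ℝ)
        = s • 1 - Matrix.diagonal lam := by
      ext i j
      by_cases h : i = j
      · subst h; simp
      · simp [Matrix.diagonal_apply_ne _ h, Matrix.one_apply_ne h]
    rw [h1d, Matrix.mul_sub, Matrix.sub_mul, ← hspec]
    congr 1
    rw [Matrix.mul_smul, mul_one, Matrix.smul_mul, hUU]
  rw [hM]
  have hdpsd : (Matrix.diagonal (fun i => s - lam i)).PosSemidef :=
    Matrix.posSemidef_diagonal_iff.mpr fun i => by have := hlamle i; linarith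
  simpa [Matrix.star_eq_conjTranspose] using hdpsd.mul_mul_conjTranspose_same U
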